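/- For all positive integers k and t ≥ 2, the graph G_t^k, obtained by taking k disjoint copies of G_t (each on 2t+1 vertices) and adding one new vertex s adjacent to all vertices in the X-set of every copy, has exactly ((t^3 + t^2)/2 − t)^k minimal connected dominating sets. -/

import Mathlib

/-- `S` is a connected dominating set of `G`. -/
def IsCDS {V : Type*} (G : SimpleGraph V) (S : Set V) : Prop :=
  (∀ v, v ∈ S ∨ ∃ u ∈ S, G.Adj u v) ∧ (G.induce S).Connected

/-- `S` is an inclusion-minimal connected dominating set of `G`. -/
def IsMinCDS {V : Type*} (G : SimpleGraph V) (S : Set V) : Prop :=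
  IsCDS G S ∧ ∀ T : Set V, T ⊂ S → ¬ IsCDS G T

/-- Vertices of `G_t`: `Sum.inl i` is `x_i`, `Sum.inr (Sum.inl j)` is `y_j`,
and `Sum.inr (Sum.inr ())` is `z`. -/
abbrev GtV (t : ℕ) := Fin t ⊕ (Fin t ⊕ Unit)

/-- Base relation for `G_t`: `X` is a clique, `x_i ~ y_j` iff `i ≠ j`,
`Y` is independent, and `z` is adjacent exactly to all of `Y`. -/
def GtRel (t : ℕ) : GtV t → GtV t → Prop
  | .inl i, .inl j => i ≠ j
  | .inl i, .inr (.inl j) => i ≠ j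
  | .inr (.inl _), .inr (.inr _) => True
  | _, _ => False

/-- The graph `G_t`. -/
def Gt (t : ℕ) : SimpleGraph (GtV t) := SimpleGraph.fromRel (GtRel t)

/-- Vertices of `G_t^k`: `k` disjoint copies of `G_t` plus a hub vertex `s`. -/
abbrev GtkV (t k : ℕ) := (Fin k × GtV t) ⊕ Unit

/-- Base relation for `G_t^k`: each copy carries the relation of `G_t`, and
the hub `s` is adjacent to all vertices of every copy's `X`-set. -/
def GtkRel (t k : ℕ) : GtkV t k → GtkV t k → Prop
  | .inl (c, u), .inl (c', u') => c = c' ∧ GtRel t u u'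
  | .inr _, .inl (_, .inl _) => True
  | .inl (_, .inl _), .inr _ => True
  | _, _ => False

/-- The graph `G_t^k`. -/
def Gtk (t k : ℕ) : SimpleGraph (GtkV t k) := SimpleGraph.fromRel (GtkRel t k)

set_option maxHeartbeats 1000000

namespace Aux
variable {t k : ℕ}

abbrev xV (i : Fin t) : GtV t := Sum.inl i
abbrev yV (j : Fin t) : GtV t := Sum.inr (Sum.inl j)
abbrev zV {t : ℕ} : GtV t := Sum.inr (Sum.inr ())
abbrev cx (c : Fin k) (i : Fin t) : GtkV t k := Sum.inl (c, xV i)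
abbrev cy (c : Fin k) (j : Fin t) : GtkV t k := Sum.inl (c, yV j)
abbrev cz (c : Fin k) : GtkV t k := Sum.inl (c, zV)
abbrev sV {t k : ℕ} : GtkV t k := Sum.inr ()

lemma adj_xx {c c' : Fin k} {i i' : Fin t} :
    (Gtk t k).Adj (cx c i) (cx c' i') ↔ c = c' ∧ i ≠ i' := by
  simp [Gtk, GtkRel, GtRel, SimpleGraph.fromRel_adj, Prod.ext_iff]
  tauto

lemma adj_xy {c c' : Fin k} {i j : Fin t} :
    (Gtk t k).Adj (cx c i) (cy c' j) ↔ c = c' ∧ i ≠ j := by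
  simp [Gtk, GtkRel, GtRel, SimpleGraph.fromRel_adj, Prod.ext_iff]

lemma adj_yz {c c' : Fin k} {j : Fin t} :
    (Gtk t k).Adj (cy c j) (cz c') ↔ c = c' := by
  simp [Gtk, GtkRel, GtRel, SimpleGraph.fromRel_adj, Prod.ext_iff]

lemma adj_xs {c : Fin k} {i : Fin t} : (Gtk t k).Adj (cx c i) sV := by
  simp [Gtk, GtkRel, GtRel, SimpleGraph.fromRel_adj]

lemma not_adj_yy {c c' : Fin k} {j j' : Fin t} : ¬ (Gtk t k).Adj (cy c j) (cy c' j') := by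
  simp [Gtk, GtkRel, GtRel, SimpleGraph.fromRel_adj, Prod.ext_iff]

lemma not_adj_xz {c c' : Fin k} {i : Fin t} : ¬ (Gtk t k).Adj (cx c i) (cz c') := by
  simp [Gtk, GtkRel, GtRel, SimpleGraph.fromRel_adj, Prod.ext_iff]

lemma not_adj_zz {c c' : Fin k} : ¬ (Gtk t k).Adj (cz c) (cz c') := by
  simp [Gtk, GtkRel, GtRel, SimpleGraph.fromRel_adj, Prod.ext_iff]

lemma not_adj_ys {c : Fin k} {j : Fin t} : ¬ (Gtk t k).Adj (cy c j) sV := by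
  simp [Gtk, GtkRel, GtRel, SimpleGraph.fromRel_adj]

lemma not_adj_zs {c : Fin k} : ¬ (Gtk t k).Adj (cz c) sV := by
  simp [Gtk, GtkRel, GtRel, SimpleGraph.fromRel_adj]

lemma adj_symm' {a b : GtkV t k} (h : (Gtk t k).Adj a b) : (Gtk t k).Adj b a := h.symm

lemma adj_cy_right {u : GtkV t k} {c : Fin k} {j : Fin t} :
    (Gtk t k).Adj u (cy c j) ↔ (∃ i, i ≠ j ∧ u = cx c i) ∨ u = cz c := by
  obtain (⟨c', (i | j' | ⟨⟩)⟩ | ⟨⟩) := u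
  · rw [adj_xy]
    constructor
    · rintro ⟨rfl, h⟩; exact Or.inl ⟨i, h, rfl⟩
    · rintro (⟨i', h, he⟩ | he) <;> simp_all
  · simp only [show (Sum.inl (c', Sum.inr (Sum.inl j')) : GtkV t k) = cy c' j' from rfl]
    constructor
    · intro h; exact absurd h not_adj_yy
    · rintro (⟨i', h, he⟩ | he) <;> simp_all
  · simp only [show (Sum.inl (c', Sum.inr (Sum.inr ())) : GtkV t k) = cz c' from rfl]
    constructor
    · intro h
      have hc : c = c' := adj_yz.mp h.symm
      subst hc; exact Or.inr rfl
    · rintro (⟨i', h, he⟩ | he)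
      · simp_all
      · rw [show (cz c' : GtkV t k) = cz c from he]
        exact (adj_yz.mpr rfl).symm
  · constructor
    · intro h; exact absurd h (fun hh => not_adj_ys hh.symm)
    · rintro (⟨i', h, he⟩ | he) <;> simp_all

lemma adj_cz_right {u : GtkV t k} {c : Fin k} :
    (Gtk t k).Adj u (cz c) ↔ ∃ j, u = cy c j := by
  obtain (⟨c', (i | j' | ⟨⟩)⟩ | ⟨⟩) := u
  · constructor
    · intro h; exact absurd h not_adj_xz
    · rintro ⟨j, he⟩; simp_all
  · rw [show (Sum.inl (c', Sum.inr (Sum.inl j')) : GtkV t k) = cy c' j' from rfl, adj_yz]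
    constructor
    · rintro rfl; exact ⟨j', rfl⟩
    · rintro ⟨j, he⟩; simp_all
  · rw [show (Sum.inl (c', Sum.inr (Sum.inr ())) : GtkV t k) = cz c' from rfl]
    constructor
    · intro h; exact absurd h not_adj_zz
    · rintro ⟨j, he⟩; simp_all
  · constructor
    · intro h; exact absurd h.symm not_adj_zs
    · rintro ⟨j, he⟩; simp_all

lemma adj_sV_right {u : GtkV t k} :
    (Gtk t k).Adj u (sV : GtkV t k) ↔ ∃ c i, u = cx c i := by
  obtain (⟨c', (i | j' | ⟨⟩)⟩ | ⟨⟩) := u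
  · exact ⟨fun _ => ⟨c', i, rfl⟩, fun _ => adj_xs⟩
  · constructor
    · intro h; exact absurd h not_adj_ys
    · rintro ⟨c, i, he⟩; simp_all
  · constructor
    · intro h; exact absurd h not_adj_zs
    · rintro ⟨c, i, he⟩; simp_all
  · constructor
    · intro h; exact absurd h (SimpleGraph.irrefl _)
    · rintro ⟨c, i, he⟩; simp_all

lemma adj_cx_right {u : GtkV t k} {c : Fin k} {i : Fin t} :
    (Gtk t k).Adj u (cx c i) ↔
      (∃ m, m ≠ i ∧ u = cx c m) ∨ (∃ j, j ≠ i ∧ u = cy c j) ∨ u = sV := by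
  obtain (⟨c', (m | j' | ⟨⟩)⟩ | ⟨⟩) := u
  · rw [adj_xx]
    constructor
    · rintro ⟨rfl, h⟩; exact Or.inl ⟨m, h, rfl⟩
    · rintro (⟨m', h, he⟩ | ⟨j, h, he⟩ | he) <;> simp_all
  · rw [show (Sum.inl (c', Sum.inr (Sum.inl j')) : GtkV t k) = cy c' j' from rfl]
    constructor
    · intro h
      rw [SimpleGraph.adj_comm, adj_xy] at h
      exact Or.inr (Or.inl ⟨j', fun hh => h.2 hh.symm, by rw [h.1]⟩)
    · rintro (⟨m', h, he⟩ | ⟨j, h, he⟩ | he)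
      · simp_all
      · have : (cy c' j' : GtkV t k) = cy c j := he
        rw [this]
        exact (adj_xy.mpr ⟨rfl, fun hh => h hh.symm⟩).symm
      · simp_all
  · rw [show (Sum.inl (c', Sum.inr (Sum.inr ())) : GtkV t k) = cz c' from rfl]
    constructor
    · intro h; exact absurd h.symm not_adj_xz
    · rintro (⟨m', h, he⟩ | ⟨j, h, he⟩ | he) <;> simp_all
  · constructor
    · intro _; exact Or.inr (Or.inr rfl)
    · intro _; exact adj_xs.symm

/-- neighbors of a copy vertex stay in the copy or are `s`. -/
lemma adj_inl {c : Fin k} {g : GtV t} {q : GtkV t k}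
    (h : (Gtk t k).Adj (Sum.inl (c, g)) q) : q = sV ∨ ∃ g', q = Sum.inl (c, g') := by
  obtain (⟨c', g'⟩ | ⟨⟩) := q
  · refine Or.inr ⟨g', ?_⟩
    have : c = c' := by
      rcases h.2 with h' | h'
      · rcases g with _|_ <;> rcases g' with _|_ <;> simp [GtkRel] at h' <;> tauto
      · rcases g with _|_ <;> rcases g' with _|_ <;> simp [GtkRel] at h' <;> simp [h'.1]
    rw [this]
  · exact Or.inl rfl

lemma induce_adj' {V : Type*} (G : SimpleGraph V) (S : Set V) (a b : S) :
    (G.induce S).Adj a b ↔ G.Adj ↑a ↑b := Iff.rfl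

lemma reach_of_adj {V : Type*} {G : SimpleGraph V} {S : Set V} {a b : V}
    (ha : a ∈ S) (hb : b ∈ S) (h : G.Adj a b) :
    (G.induce S).Reachable ⟨a, ha⟩ ⟨b, hb⟩ :=
  SimpleGraph.Adj.reachable h

lemma connected_of_hub {V : Type*} (G : SimpleGraph V) (S : Set V) (hub : V) (hhub : hub ∈ S)
    (hr : ∀ v (hv : v ∈ S), (G.induce S).Reachable ⟨v, hv⟩ ⟨hub, hhub⟩) :
    (G.induce S).Connected := by
  rw [SimpleGraph.connected_iff]
  refine ⟨fun a b => ?_, ⟨⟨hub, hhub⟩⟩⟩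
  exact (hr a a.2).trans (hr b b.2).symm

/-- walk confinement: if `C` is closed under adjacency inside `T`, reachability stays in `C`. -/
lemma no_cross {V : Type*} {G : SimpleGraph V} {T C : Set V}
    (hC : ∀ p ∈ C, ∀ q ∈ T, G.Adj p q → q ∈ C)
    {a b : T} (h : (G.induce T).Reachable a b) (ha : ↑a ∈ C) : ↑b ∈ C := by
  obtain ⟨p⟩ := h
  induction p with
  | nil => exact ha
  | cons hadj p ih => exact ih (hC _ ha _ (by exact Subtype.coe_prop _) hadj)

lemma exists_adj_of_reachable_ne {V : Type*} {G : SimpleGraph V} {T : Set V}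
    {a b : T} (h : (G.induce T).Reachable a b) (hne : (a : V) ≠ b) :
    ∃ w ∈ T, G.Adj ↑a w := by
  obtain ⟨p⟩ := h
  cases p with
  | nil => exact absurd rfl hne
  | cons hadj p => exact ⟨_, Subtype.coe_prop _, hadj⟩

def PieceData (t : ℕ) :=
  {p : Fin t × Fin t // p.1 ≠ p.2} ⊕ {p : (Fin t × Fin t) × Fin t // p.1.1 < p.1.2}

instance : Fintype (PieceData t) := by unfold PieceData; infer_instance
instance : DecidableEq (PieceData t) := by unfold PieceData; infer_instance

def pieceSet : PieceData t → Set (GtV t)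
  | .inl p => {xV p.1.1, yV p.1.2, zV}
  | .inr p => {xV p.1.1.1, xV p.1.1.2, yV p.1.2}

def anchor : PieceData t → Fin t
  | .inl p => p.1.1
  | .inr p => p.1.1.1

lemma anchor_mem (p : PieceData t) : xV (anchor p) ∈ pieceSet p := by
  cases p <;> simp [pieceSet, anchor]

def FF (f : Fin k → PieceData t) : Set (GtkV t k) :=
  (if 2 ≤ k then {sV} else ∅) ∪ ⋃ c, (fun u => Sum.inl (c, u)) '' pieceSet (f c)

lemma mem_FF_inl {f : Fin k → PieceData t} {c : Fin k} {u : GtV t} :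
    Sum.inl (c, u) ∈ FF f ↔ u ∈ pieceSet (f c) := by
  unfold FF
  constructor
  · intro h
    rcases h with h | h
    · split at h <;> simp_all
    · simp only [Set.mem_iUnion, Set.mem_image] at h
      obtain ⟨c', u', hu', he⟩ := h
      obtain ⟨rfl, rfl⟩ : c' = c ∧ u' = u := by
        injection he with h'
        exact ⟨congrArg Prod.fst h', congrArg Prod.snd h'⟩
      exact hu'
  · intro h
    exact Or.inr (Set.mem_iUnion.mpr ⟨c, ⟨u, h, rfl⟩⟩)

lemma mem_FF_s {f : Fin k → PieceData t} : (sV : GtkV t k) ∈ FF f ↔ 2 ≤ k := by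
  unfold FF
  constructor
  · intro h
    rcases h with h | h
    · split at h
      · assumption
      · simp at h
    · simp only [Set.mem_iUnion, Set.mem_image] at h
      obtain ⟨c', u', hu', he⟩ := h
      exact absurd he (by simp)
  · intro h
    exact Or.inl (by rw [if_pos h]; rfl)

lemma reach_anchor' (S : Set (GtkV t k)) (c : Fin k) (p : PieceData t)
    (hsub : ∀ u ∈ pieceSet p, Sum.inl (c, u) ∈ S) (u : GtV t) (hu : u ∈ pieceSet p) :
    ((Gtk t k).induce S).Reachable ⟨Sum.inl (c, u), hsub _ hu⟩
      ⟨cx c (anchor p), hsub _ (anchor_mem _)⟩ := by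
  rcases p with ⟨⟨a, b⟩, hab⟩ | ⟨⟨⟨a, b⟩, j⟩, hab⟩
  · have hxa : (cx c a : GtkV t k) ∈ S := hsub _ (by simp [pieceSet])
    have hyb : (cy c b : GtkV t k) ∈ S := hsub _ (by simp [pieceSet])
    have hyx : ((Gtk t k).induce S).Reachable ⟨cy c b, hyb⟩ ⟨cx c a, hxa⟩ :=
      reach_of_adj _ _ ((adj_xy.mpr ⟨rfl, hab⟩).symm)
    simp only [pieceSet, Set.mem_insert_iff, Set.mem_singleton_iff] at hu
    rcases hu with rfl | rfl | rfl
    · rfl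
    · exact hyx
    · exact (reach_of_adj (hsub _ (by simp [pieceSet])) hyb ((adj_yz.mpr rfl).symm)).trans hyx
  · have hxa : (cx c a : GtkV t k) ∈ S := hsub _ (by simp [pieceSet])
    have hxb : (cx c b : GtkV t k) ∈ S := hsub _ (by simp [pieceSet])
    have hba : ((Gtk t k).induce S).Reachable ⟨cx c b, hxb⟩ ⟨cx c a, hxa⟩ :=
      reach_of_adj _ _ (adj_xx.mpr ⟨rfl, hab.ne'⟩)
    simp only [pieceSet, Set.mem_insert_iff, Set.mem_singleton_iff] at hu
    rcases hu with rfl | rfl | rfl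
    · rfl
    · exact hba
    · by_cases hja : a = j
      · have hbj : b ≠ j := hja ▸ hab.ne'
        exact (reach_of_adj (hsub _ (by simp [pieceSet])) hxb
          ((adj_xy.mpr ⟨rfl, hbj⟩).symm)).trans hba
      · exact reach_of_adj (hsub _ (by simp [pieceSet])) hxa ((adj_xy.mpr ⟨rfl, hja⟩).symm)

lemma reach_anchor (f : Fin k → PieceData t) (c : Fin k) (u : GtV t)
    (hu : u ∈ pieceSet (f c)) :
    ((Gtk t k).induce (FF f)).Reachable ⟨Sum.inl (c, u), mem_FF_inl.mpr hu⟩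
      ⟨cx c (anchor (f c)), mem_FF_inl.mpr (anchor_mem _)⟩ :=
  reach_anchor' (FF f) c (f c) (fun _ h => mem_FF_inl.mpr h) u hu

lemma isCDS_FF (hk : 1 ≤ k) (f : Fin k → PieceData t) : IsCDS (Gtk t k) (FF f) := by
  constructor
  · -- domination
    rintro (⟨c, (i | j | ⟨⟩)⟩ | ⟨⟩)
    · -- x i
      rcases hp : f c with ⟨⟨a, b⟩, hab⟩ | ⟨⟨⟨a, b⟩, j⟩, hab⟩ <;>
      · by_cases hia : i = a
        · subst hia
          exact Or.inl (mem_FF_inl.mpr (by rw [hp]; simp [pieceSet]))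
        · exact Or.inr ⟨cx c a, mem_FF_inl.mpr (by rw [hp]; simp [pieceSet]),
            adj_cx_right.mpr (Or.inl ⟨a, fun h => hia h.symm, rfl⟩)⟩
    · -- y j
      rcases hp : f c with ⟨⟨a, b⟩, hab⟩ | ⟨⟨⟨a, b⟩, jj⟩, hab⟩
      · exact Or.inr ⟨cz c, mem_FF_inl.mpr (by rw [hp]; simp [pieceSet]),
          adj_cy_right.mpr (Or.inr rfl)⟩
      · by_cases hjj : j = jj
        · subst hjj
          exact Or.inl (mem_FF_inl.mpr (by rw [hp]; simp [pieceSet]))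
        · by_cases hja : a = j
          · have hbj : b ≠ j := hja ▸ hab.ne'
            exact Or.inr ⟨cx c b, mem_FF_inl.mpr (by rw [hp]; simp [pieceSet]),
              adj_cy_right.mpr (Or.inl ⟨b, hbj, rfl⟩)⟩
          · exact Or.inr ⟨cx c a, mem_FF_inl.mpr (by rw [hp]; simp [pieceSet]),
              adj_cy_right.mpr (Or.inl ⟨a, hja, rfl⟩)⟩
    · -- z
      rcases hp : f c with ⟨⟨a, b⟩, hab⟩ | ⟨⟨⟨a, b⟩, j⟩, hab⟩
      · exact Or.inl (mem_FF_inl.mpr (by rw [hp]; simp [pieceSet]))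
      · exact Or.inr ⟨cy c j, mem_FF_inl.mpr (by rw [hp]; simp [pieceSet]),
          adj_cz_right.mpr ⟨j, rfl⟩⟩
    · -- s
      by_cases h2 : 2 ≤ k
      · exact Or.inl (mem_FF_s.mpr h2)
      · have c0 : Fin k := ⟨0, hk⟩
        exact Or.inr ⟨cx ⟨0, hk⟩ (anchor (f ⟨0, hk⟩)),
          mem_FF_inl.mpr (anchor_mem _), adj_xs⟩
  · -- connectivity
    by_cases h2 : 2 ≤ k
    · refine connected_of_hub _ _ sV (mem_FF_s.mpr h2) ?_
      rintro (⟨c, u⟩ | ⟨⟩) hv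
      · have hu : u ∈ pieceSet (f c) := mem_FF_inl.mp hv
        refine (reach_anchor f c u hu).trans ?_
        exact reach_of_adj _ _ adj_xs
      · rfl
    · have hk1 : k = 1 := by omega
      refine connected_of_hub _ _ (cx ⟨0, hk⟩ (anchor (f ⟨0, hk⟩)))
        (mem_FF_inl.mpr (anchor_mem _)) ?_
      rintro (⟨c, u⟩ | ⟨⟩) hv
      · have hc : c = ⟨0, hk⟩ := by
          apply Fin.ext
          omega
        subst hc
        exact reach_anchor f _ u (mem_FF_inl.mp hv)
      · exact absurd (mem_FF_s.mp hv) h2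

lemma two_elt {α : Type*} {a b i j m : α} (hji : j ≠ i) (hmj : m ≠ j)
    (h1 : m = a ∨ m = b) (h2 : i = a ∨ i = b) (h3 : j = a ∨ j = b) : m = i := by
  rcases h1 with h1 | h1 <;> rcases h2 with h2 | h2 <;> rcases h3 with h3 | h3 <;> simp_all

lemma zdom {T : Set (GtkV t k)} (hdom : ∀ v, v ∈ T ∨ ∃ u ∈ T, (Gtk t k).Adj u v)
    (c : Fin k) : ∃ w ∈ T, w = cz c ∨ ∃ j', w = cy c j' := by
  rcases hdom (cz c) with h | ⟨u, hu, hadj⟩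
  · exact ⟨cz c, h, Or.inl rfl⟩
  · obtain ⟨j, rfl⟩ := adj_cz_right.mp hadj
    exact ⟨cy c j, hu, Or.inr ⟨j, rfl⟩⟩

lemma sdom {T : Set (GtkV t k)} (hdom : ∀ v, v ∈ T ∨ ∃ u ∈ T, (Gtk t k).Adj u v) :
    ∃ w ∈ T, w = sV ∨ ∃ c' i', w = cx c' i' := by
  rcases hdom sV with h | ⟨u, hu, hadj⟩
  · exact ⟨sV, h, Or.inl rfl⟩
  · obtain ⟨c', i', rfl⟩ := adj_sV_right.mp hadj
    exact ⟨cx c' i', hu, Or.inr ⟨c', i', rfl⟩⟩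

lemma isMin_FF (hk : 1 ≤ k) (f : Fin k → PieceData t) :
    ∀ T : Set (GtkV t k), T ⊂ FF f → ¬ IsCDS (Gtk t k) T := by
  intro T hT hCDS
  have hTsub : T ⊆ FF f := hT.subset
  obtain ⟨v, hvS, hvT⟩ := Set.exists_of_ssubset hT
  obtain ⟨hdom, hconn⟩ := hCDS
  rcases v with ⟨c, (i | j | ⟨⟩)⟩ | ⟨⟩
  · -- removed an x vertex
    have hmem : xV i ∈ pieceSet (f c) := mem_FF_inl.mp hvS
    rcases hp : f c with ⟨⟨a, b⟩, hab⟩ | ⟨⟨⟨a, b⟩, j⟩, hab⟩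
    · -- piece1 {x a, y b, z}; i = a
      rw [hp] at hmem; simp [pieceSet] at hmem
      subst hmem
      -- w : z-dominator in {cy c b, cz c}
      obtain ⟨w, hwT, hw⟩ := zdom hdom c
      have hwC : w = cy c b ∨ w = cz c := by
        rcases hw with rfl | ⟨j', rfl⟩
        · exact Or.inr rfl
        · have := mem_FF_inl.mp (hTsub hwT)
          rw [hp] at this; simp [pieceSet] at this
          subst this; exact Or.inl rfl
      obtain ⟨uu, huuT, huu⟩ := sdom hdom
      have hclosed : ∀ p ∈ {w' | w' ∈ T ∧ (w' = cy c b ∨ w' = cz c)}, ∀ q ∈ T,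
          (Gtk t k).Adj p q → q ∈ {w' | w' ∈ T ∧ (w' = cy c b ∨ w' = cz c)} := by
        rintro p ⟨hpT, (rfl | rfl)⟩ q hqT hadj
        · rcases adj_cy_right.mp hadj.symm with ⟨m, hm, rfl⟩ | rfl
          · have := mem_FF_inl.mp (hTsub hqT)
            rw [hp] at this; simp [pieceSet] at this
            subst this; exact absurd hqT hvT
          · exact ⟨hqT, Or.inr rfl⟩
        · obtain ⟨j', rfl⟩ := adj_cz_right.mp hadj.symm
          have := mem_FF_inl.mp (hTsub hqT)
          rw [hp] at this; simp [pieceSet] at this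
          subst this; exact ⟨hqT, Or.inl rfl⟩
      have := no_cross hclosed (hconn.preconnected ⟨w, hwT⟩ ⟨uu, huuT⟩)
        ⟨hwT, hwC.imp id id⟩
      rcases huu with rfl | ⟨c', i', rfl⟩ <;> rcases this.2 with h | h <;> simp_all
    · -- piece2 {x a, x b, y j}; i = a ∨ i = b
      rw [hp] at hmem; simp [pieceSet] at hmem
      -- unified handling: let a₂ be the *other* x index
      obtain ⟨a₂, ha₂S, ha₂i⟩ : ∃ a₂, xV a₂ ∈ pieceSet (f c) ∧ a₂ ≠ i := by
        rcases hmem with rfl | rfl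
        · exact ⟨b, by rw [hp]; simp [pieceSet], hab.ne'⟩
        · exact ⟨a, by rw [hp]; simp [pieceSet], hab.ne⟩
      by_cases hja : j = a₂
      · -- z-dominator forces cy c a₂ ∈ T, isolated
        subst hja
        obtain ⟨w, hwT, hw⟩ := zdom hdom c
        have hwC : w = cy c j := by
          rcases hw with rfl | ⟨j', rfl⟩
          · have := mem_FF_inl.mp (hTsub hwT)
            rw [hp] at this; simp [pieceSet] at this
          · have := mem_FF_inl.mp (hTsub hwT)
            rw [hp] at this; simp [pieceSet] at this
            subst this; rfl
        subst hwC
        obtain ⟨uu, huuT, huu⟩ := sdom hdom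
        have hclosed : ∀ p ∈ {w' | w' = cy c j}, ∀ q ∈ T,
            (Gtk t k).Adj p q → q ∈ {w' | w' = cy c j} := by
          rintro p rfl q hqT hadj
          rcases adj_cy_right.mp hadj.symm with ⟨m, hm, rfl⟩ | rfl
          · have hmm := mem_FF_inl.mp (hTsub hqT)
            rw [hp] at hmm; simp [pieceSet] at hmm
            have ha₂S' : j = a ∨ j = b := by
              have h' : xV j ∈ pieceSet (f c) := ha₂S
              rw [hp] at h'; simp [pieceSet] at h'
              exact h'
            have hmi : m = i := two_elt ha₂i hm hmm hmem ha₂S'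
            exact absurd (hmi ▸ hqT) hvT
          · have := mem_FF_inl.mp (hTsub hqT)
            rw [hp] at this; simp [pieceSet] at this
        have := no_cross hclosed (hconn.preconnected ⟨cy c j, hwT⟩ ⟨uu, huuT⟩) rfl
        rcases huu with rfl | ⟨c', i', rfl⟩ <;> simp_all
      · -- y_{a₂} undominated
        rcases hdom (cy c a₂) with h | ⟨u, hu, hadj⟩
        · have := mem_FF_inl.mp (hTsub h)
          rw [hp] at this; simp [pieceSet] at this
          exact hja this.symm
        · rcases adj_cy_right.mp hadj with ⟨m, hm, rfl⟩ | rfl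
          · have := mem_FF_inl.mp (hTsub hu)
            rw [hp] at this; simp [pieceSet] at this
            have ha₂' : xV a₂ ∈ ({xV a, xV b, yV j} : Set (GtV t)) := by
              rw [hp] at ha₂S; exact ha₂S
            simp [pieceSet] at ha₂'
            rcases this with rfl | rfl <;> rcases ha₂' with h2 | h2 <;>
              rcases hmem with rfl | rfl <;> simp_all
          · have := mem_FF_inl.mp (hTsub hu)
            rw [hp] at this; simp [pieceSet] at this
  · -- removed a y vertex
    have hmem : yV j ∈ pieceSet (f c) := mem_FF_inl.mp hvS
    rcases hp : f c with ⟨⟨a, b⟩, hab⟩ | ⟨⟨⟨a, b⟩, jj⟩, hab⟩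
    · -- piece1; j = b
      rw [hp] at hmem; simp [pieceSet] at hmem
      subst hmem
      by_cases hz : cz c ∈ T
      · obtain ⟨uu, huuT, huu⟩ := sdom hdom
        have hclosed : ∀ p ∈ {w' | w' = (cz c : GtkV t k)}, ∀ q ∈ T,
            (Gtk t k).Adj p q → q ∈ {w' | w' = (cz c : GtkV t k)} := by
          rintro p rfl q hqT hadj
          obtain ⟨j', rfl⟩ := adj_cz_right.mp hadj.symm
          have := mem_FF_inl.mp (hTsub hqT)
          rw [hp] at this; simp [pieceSet] at this
          subst this; exact absurd hqT hvT
        have := no_cross hclosed (hconn.preconnected ⟨cz c, hz⟩ ⟨uu, huuT⟩) rfl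
        rcases huu with rfl | ⟨c', i', rfl⟩ <;> simp_all
      · obtain ⟨w, hwT, hw⟩ := zdom hdom c
        rcases hw with rfl | ⟨j', rfl⟩
        · exact hz hwT
        · have := mem_FF_inl.mp (hTsub hwT)
          rw [hp] at this; simp [pieceSet] at this
          subst this; exact hvT hwT
    · -- piece2; j = jj : z undominated
      rw [hp] at hmem; simp [pieceSet] at hmem
      subst hmem
      obtain ⟨w, hwT, hw⟩ := zdom hdom c
      rcases hw with rfl | ⟨j', rfl⟩
      · have := mem_FF_inl.mp (hTsub hwT)
        rw [hp] at this; simp [pieceSet] at this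
      · have := mem_FF_inl.mp (hTsub hwT)
        rw [hp] at this; simp [pieceSet] at this
        subst this; exact hvT hwT
  · -- removed z : piece1, y_a undominated
    have hmem : zV ∈ pieceSet (f c) := mem_FF_inl.mp hvS
    rcases hp : f c with ⟨⟨a, b⟩, hab⟩ | ⟨⟨⟨a, b⟩, jj⟩, hab⟩
    · rcases hdom (cy c a) with h | ⟨u, hu, hadj⟩
      · have := mem_FF_inl.mp (hTsub h)
        rw [hp] at this; simp [pieceSet] at this
        exact hab this
      · rcases adj_cy_right.mp hadj with ⟨m, hm, rfl⟩ | rfl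
        · have := mem_FF_inl.mp (hTsub hu)
          rw [hp] at this; simp [pieceSet] at this
          exact hm this
        · exact hvT hu
    · rw [hp] at hmem; simp [pieceSet] at hmem
  · -- removed s
    have h2 : 2 ≤ k := mem_FF_s.mp hvS
    have c01 : (⟨0, by omega⟩ : Fin k) ≠ ⟨1, by omega⟩ :=
      Fin.ne_of_val_ne (by norm_num)
    obtain ⟨w0, hw0T, hw0⟩ := zdom hdom ⟨0, by omega⟩
    obtain ⟨w1, hw1T, hw1⟩ := zdom hdom ⟨1, by omega⟩
    have hclosed : ∀ p ∈ {w' | ∃ g, w' = Sum.inl ((⟨0, by omega⟩ : Fin k), g)}, ∀ q ∈ T,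
        (Gtk t k).Adj p q → q ∈ {w' | ∃ g, w' = Sum.inl ((⟨0, by omega⟩ : Fin k), g)} := by
      rintro p ⟨g, rfl⟩ q hqT hadj
      rcases adj_inl hadj with rfl | ⟨g', rfl⟩
      · exact absurd hqT hvT
      · exact ⟨g', rfl⟩
    have hw0C : w0 ∈ {w' | ∃ g, w' = Sum.inl ((⟨0, by omega⟩ : Fin k), g)} := by
      rcases hw0 with rfl | ⟨j', rfl⟩
      · exact ⟨_, rfl⟩
      · exact ⟨_, rfl⟩
    have := no_cross hclosed (hconn.preconnected ⟨w0, hw0T⟩ ⟨w1, hw1T⟩) hw0C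
    obtain ⟨g, hg⟩ := this
    rcases hw1 with rfl | ⟨j', rfl⟩ <;>
    · injection hg with h'
      exact c01 (congrArg Prod.fst h').symm

lemma exists_FF_subset (hk : 1 ≤ k) {S : Set (GtkV t k)} (hS : IsCDS (Gtk t k) S) :
    ∃ f : Fin k → PieceData t, FF f ⊆ S := by
  obtain ⟨hdom, hconn⟩ := hS
  -- s ∈ S when k ≥ 2
  have hs2 : 2 ≤ k → (sV : GtkV t k) ∈ S := by
    intro h2
    by_contra hs
    obtain ⟨w0, hw0T, hw0⟩ := zdom hdom ⟨0, by omega⟩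
    obtain ⟨w1, hw1T, hw1⟩ := zdom hdom ⟨1, by omega⟩
    have c01 : (⟨0, by omega⟩ : Fin k) ≠ ⟨1, by omega⟩ := Fin.ne_of_val_ne (by norm_num)
    have hclosed : ∀ p ∈ {w' | ∃ g, w' = Sum.inl ((⟨0, by omega⟩ : Fin k), g)}, ∀ q ∈ S,
        (Gtk t k).Adj p q → q ∈ {w' | ∃ g, w' = Sum.inl ((⟨0, by omega⟩ : Fin k), g)} := by
      rintro p ⟨g, rfl⟩ q hqT hadj
      rcases adj_inl hadj with rfl | ⟨g', rfl⟩
      · exact absurd hqT hs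
      · exact ⟨g', rfl⟩
    have hw0C : w0 ∈ {w' | ∃ g, w' = Sum.inl ((⟨0, by omega⟩ : Fin k), g)} := by
      rcases hw0 with rfl | ⟨j', rfl⟩ <;> exact ⟨_, rfl⟩
    obtain ⟨g, hg⟩ := no_cross hclosed (hconn.preconnected ⟨w0, hw0T⟩ ⟨w1, hw1T⟩) hw0C
    rcases hw1 with rfl | ⟨j', rfl⟩ <;>
    · injection hg with h'
      exact c01 (congrArg Prod.fst h').symm
  -- every copy contains an x vertex of S
  have hxc : ∀ c, ∃ i, cx c i ∈ S := by
    intro c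
    by_contra hA
    push_neg at hA
    obtain ⟨w, hwT, hw⟩ := zdom hdom c
    obtain ⟨uu, huuT, huu⟩ := sdom hdom
    have hclosed : ∀ p ∈ {w' | w' = cz c ∨ ∃ j', w' = cy c j'}, ∀ q ∈ S,
        (Gtk t k).Adj p q → q ∈ {w' | w' = cz c ∨ ∃ j', w' = cy c j'} := by
      rintro p (rfl | ⟨j', rfl⟩) q hqT hadj
      · obtain ⟨j', rfl⟩ := adj_cz_right.mp hadj.symm
        exact Or.inr ⟨j', rfl⟩
      · rcases adj_cy_right.mp hadj.symm with ⟨m, _, rfl⟩ | rfl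
        · exact absurd hqT (hA m)
        · exact Or.inl rfl
    have hwC : w ∈ {w' | w' = cz c ∨ ∃ j', w' = cy c j'} := by
      rcases hw with rfl | ⟨j', rfl⟩
      · exact Or.inl rfl
      · exact Or.inr ⟨j', rfl⟩
    have := no_cross hclosed (hconn.preconnected ⟨w, hwT⟩ ⟨uu, huuT⟩) hwC
    rcases huu with rfl | ⟨c', i', rfl⟩ <;> rcases this with h | ⟨j', h⟩ <;> simp_all
  -- per-copy piece
  have hpc : ∀ c, ∃ p : PieceData t, ∀ u ∈ pieceSet p, Sum.inl (c, u) ∈ S := by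
    intro c
    obtain ⟨a, haS⟩ := hxc c
    by_cases hz : cz c ∈ S
    · -- find a y neighbor of z
      have hzx : (cz c : GtkV t k) ≠ cx c a := by simp
      obtain ⟨w, hwS, hadj⟩ :=
        exists_adj_of_reachable_ne (hconn.preconnected ⟨cz c, hz⟩ ⟨cx c a, haS⟩) hzx
      obtain ⟨j0, rfl⟩ := adj_cz_right.mp hadj.symm
      by_cases hex : ∃ i j', cx c i ∈ S ∧ cy c j' ∈ S ∧ i ≠ j'
      · obtain ⟨i, j', hi, hj', hij⟩ := hex
        refine ⟨Sum.inl ⟨(i, j'), hij⟩, ?_⟩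
        intro u hu
        simp [pieceSet] at hu
        rcases hu with rfl | rfl | rfl <;> assumption
      · push_neg at hex
        have haj0 : a = j0 := hex a j0 haS hwS
        subst haj0
        have hclosed : ∀ p ∈ {w' | w' = cy c a ∨ w' = cz c}, ∀ q ∈ S,
            (Gtk t k).Adj p q → q ∈ {w' | w' = cy c a ∨ w' = cz c} := by
          rintro p (rfl | rfl) q hqT hadj'
          · rcases adj_cy_right.mp hadj'.symm with ⟨m, hm, rfl⟩ | rfl
            · exact absurd (hex m a hqT hwS) hm
            · exact Or.inr rfl
          · obtain ⟨j', rfl⟩ := adj_cz_right.mp hadj'.symm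
            have := hex a j' haS hqT
            subst this
            exact Or.inl rfl
        have := no_cross hclosed (hconn.preconnected ⟨cz c, hz⟩ ⟨cx c a, haS⟩) (Or.inr rfl)
        rcases this with h | h <;> simp_all
    · -- no z : find y, and two x's
      obtain ⟨w, hwT, hw⟩ := zdom hdom c
      have hj0 : ∃ j0, cy c j0 ∈ S := by
        rcases hw with rfl | ⟨j', rfl⟩
        · exact absurd hwT hz
        · exact ⟨j', hwT⟩
      obtain ⟨j0, hj0S⟩ := hj0
      by_cases hex2 : ∃ i m, cx c i ∈ S ∧ cx c m ∈ S ∧ i < m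
      · obtain ⟨i, m, hi, hm, him⟩ := hex2
        refine ⟨Sum.inr ⟨((i, m), j0), him⟩, ?_⟩
        intro u hu
        simp [pieceSet] at hu
        rcases hu with rfl | rfl | rfl <;> assumption
      · push_neg at hex2
        have hxa : ∀ i, cx c i ∈ S → i = a := by
          intro i hi
          rcases lt_trichotomy i a with h | h | h
          · exact absurd h (not_lt.mpr (hex2 i a hi haS))
          · exact h
          · exact absurd h (not_lt.mpr (hex2 a i haS hi))
        have hya : cy c a ∈ S := by
          rcases hdom (cy c a) with h | ⟨u, hu, hadj⟩
          · exact h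
          · rcases adj_cy_right.mp hadj with ⟨m, hm, rfl⟩ | rfl
            · exact absurd (hxa m hu) hm
            · exact absurd hu hz
        have hclosed : ∀ p ∈ {w' | w' = cy c a}, ∀ q ∈ S,
            (Gtk t k).Adj p q → q ∈ {w' | w' = cy c a} := by
          rintro p rfl q hqT hadj'
          rcases adj_cy_right.mp hadj'.symm with ⟨m, hm, rfl⟩ | rfl
          · exact absurd (hxa m hqT) hm
          · exact absurd hqT hz
        have := no_cross hclosed (hconn.preconnected ⟨cy c a, hya⟩ ⟨cx c a, haS⟩) rfl
        simp_all
  choose g hg using hpc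
  refine ⟨g, ?_⟩
  rintro v (hb | hU)
  · split at hb
    · next h2 => rw [Set.mem_singleton_iff.mp hb]; exact hs2 h2
    · exact absurd hb (Set.notMem_empty _)
  · simp only [Set.mem_iUnion, Set.mem_image] at hU
    obtain ⟨c, u, hu, rfl⟩ := hU
    exact hg c u hu

lemma minCDS_eq_range (hk : 1 ≤ k) :
    {S : Set (GtkV t k) | IsMinCDS (Gtk t k) S} = Set.range (FF : (Fin k → PieceData t) → _) := by
  ext S
  constructor
  · rintro ⟨hCDS, hmin⟩
    obtain ⟨f, hsub⟩ := exists_FF_subset hk hCDS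
    rcases eq_or_ssubset_of_subset hsub with h | h
    · exact ⟨f, h⟩
    · exact absurd (isCDS_FF hk f) (hmin _ h)
  · rintro ⟨f, rfl⟩
    exact ⟨isCDS_FF hk f, isMin_FF hk f⟩

lemma pair_lt_eq {a b a' b' : ℕ} (h1 : a < b) (h2 : a' < b')
    (m1 : a = a' ∨ a = b') (m2 : b = a' ∨ b = b') : a = a' ∧ b = b' := by omega

lemma pieceSet_inj : Function.Injective (pieceSet : PieceData t → Set (GtV t)) := by
  rintro (⟨⟨a, b⟩, hab⟩ | ⟨⟨⟨a, b⟩, j⟩, hab⟩) (⟨⟨a', b'⟩, hab'⟩ | ⟨⟨⟨a', b'⟩, j'⟩, hab'⟩) h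
  · have h1 := Set.ext_iff.mp h (xV a)
    have h2 := Set.ext_iff.mp h (yV b)
    simp [pieceSet] at h1 h2
    simp [h1, h2]; rfl
  · have h1 := Set.ext_iff.mp h zV
    simp [pieceSet] at h1
  · have h1 := Set.ext_iff.mp h zV
    simp [pieceSet] at h1
  · have h1 := Set.ext_iff.mp h (xV a)
    have h2 := Set.ext_iff.mp h (xV b)
    have h3 := Set.ext_iff.mp h (yV j)
    simp [pieceSet] at h1 h2 h3
    have key : (a : Fin t) = a' ∧ (b : Fin t) = b' := by
      have := pair_lt_eq hab hab'
        (h1.imp (congrArg Fin.val) (congrArg Fin.val))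
        (h2.imp (congrArg Fin.val) (congrArg Fin.val))
      exact ⟨Fin.ext this.1, Fin.ext this.2⟩
    simp [key.1, key.2, h3]; rfl

lemma FF_inj (hk : 1 ≤ k) : Function.Injective (FF : (Fin k → PieceData t) → _) := by
  intro f g h
  funext c
  apply pieceSet_inj
  ext u
  rw [← mem_FF_inl (f := f) (c := c), ← mem_FF_inl (f := g) (c := c), h]

lemma card_PieceData (ht : 2 ≤ t) :
    Fintype.card (PieceData t) = (t ^ 3 + t ^ 2) / 2 - t := by
  have e1 : Fintype.card {p : Fin t × Fin t // p.1 ≠ p.2} = t * t - t := by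
    rw [Fintype.card_subtype]
    have : (Finset.univ.filter fun p : Fin t × Fin t => p.1 ≠ p.2) = Finset.univ.offDiag := by
      ext p
      simp [Finset.mem_offDiag]
    rw [this, Finset.offDiag_card]
    simp
  -- double counting for < pairs
  have e2 : 2 * Fintype.card {p : Fin t × Fin t // p.1 < p.2} = t * t - t := by
    have e : ({p : Fin t × Fin t // p.1 < p.2} ⊕ {p : Fin t × Fin t // p.1 < p.2}) ≃
        {p : Fin t × Fin t // p.1 ≠ p.2} :=
      { toFun := fun q => match q with
          | .inl ⟨p, h⟩ => ⟨p, ne_of_lt h⟩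
          | .inr ⟨p, h⟩ => ⟨(p.2, p.1), (ne_of_lt h).symm⟩
        invFun := fun q =>
          if hlt : q.1.1 < q.1.2 then .inl ⟨q.1, hlt⟩
          else .inr ⟨(q.1.2, q.1.1), lt_of_le_of_ne (not_lt.mp hlt) q.2.symm⟩
        left_inv := by
          rintro (⟨⟨a, b⟩, h⟩ | ⟨⟨a, b⟩, h⟩)
          · simp [h]
          · simp [not_lt.mpr (le_of_lt h), asymm h]
        right_inv := by
          rintro ⟨⟨a, b⟩, h⟩
          by_cases hlt : a < b <;> simp [hlt] }
    have := Fintype.card_congr e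
    rw [Fintype.card_sum] at this
    omega
    
  have e3 : Fintype.card {p : (Fin t × Fin t) × Fin t // p.1.1 < p.1.2} =
      Fintype.card {p : Fin t × Fin t // p.1 < p.2} * t := by
    have e : {p : (Fin t × Fin t) × Fin t // p.1.1 < p.1.2} ≃
        {p : Fin t × Fin t // p.1 < p.2} × Fin t :=
      { toFun := fun q => (⟨q.1.1, q.2⟩, q.1.2)
        invFun := fun q => ⟨(q.1.1, q.2), q.1.2⟩
        left_inv := by rintro ⟨⟨p, j⟩, h⟩; rfl
        right_inv := by rintro ⟨⟨p, h⟩, j⟩; rfl }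
    rw [Fintype.card_congr e, Fintype.card_prod, Fintype.card_fin]
  have hcard : Fintype.card (PieceData t) =
      (t * t - t) + Fintype.card {p : Fin t × Fin t // p.1 < p.2} * t := by
    unfold PieceData
    rw [Fintype.card_sum, e1, e3]
  set L := Fintype.card {p : Fin t × Fin t // p.1 < p.2} with hL
  have h2' : 2 * (L * t) = (t * t - t) * t := by
    calc 2 * (L * t) = (2 * L) * t := by ring
    _ = (t * t - t) * t := by rw [e2]
  have h3' : (t * t - t) * t = t * t * t - t * t := Nat.sub_mul _ _ _
  have hp3 : t ^ 3 = t * t * t := by ring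
  have hp2 : t ^ 2 = t * t := by ring
  rw [hcard, hp3, hp2]
  have h4 : t ≤ t * t := Nat.le_mul_of_pos_left t (by omega)
  have h5 : t * t ≤ t * t * t := Nat.le_mul_of_pos_right _ (by omega)
  generalize hC : L * t = C at *
  generalize hB : t * t * t = B at *
  generalize hA : t * t = A at *
  omega

end Aux

theorem stmt13 (t k : ℕ) (ht : 2 ≤ t) (hk : 1 ≤ k) :
    {S : Set (GtkV t k) | IsMinCDS (Gtk t k) S}.ncard =
      ((t ^ 3 + t ^ 2) / 2 - t) ^ k := by
  rw [Aux.minCDS_eq_range hk, ← Set.image_univ,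
    Set.ncard_image_of_injective _ (Aux.FF_inj hk), Set.ncard_univ,
    Nat.card_eq_fintype_card, Fintype.card_fun, Aux.card_PieceData ht, Fintype.card_fin]
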